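/- Under the same hypotheses (Ω bounded strictly convex, φ a C² defining function, f = -log φ), if x_k, y_k ∈ Ω with x_k → x₀ and y_k → x₀ for some x₀ ∈ ∂Ω, then lim inf E_f(x_k, y_k) ≥ 0; moreover if x_k ≠ y_k for large k, then E_f(x_k,y_k)/‖y_k-x_k‖ → +∞. -/

import Mathlib

set_option maxHeartbeats 1000000

noncomputable def segEf {n : ℕ} (f : EuclideanSpace ℝ (Fin n) → ℝ)
    (x y : EuclideanSpace ℝ (Fin n)) : ℝ :=
  ∫ s in (0:ℝ)..‖y - x‖,
    iteratedFDeriv ℝ 2 f (x + s • (‖y - x‖⁻¹ • (y - x)))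
      ![‖y - x‖⁻¹ • (y - x), ‖y - x‖⁻¹ • (y - x)]

open Filter Topology Set

section Aux

variable {E : Type*} [NormedAddCommGroup E] [NormedSpace ℝ E]

lemma hessNegLog (φ : E → ℝ) (x : E) (h2 : ContDiffAt ℝ 2 φ x) (hx : φ x ≠ 0) (u : E) :
    iteratedFDeriv ℝ 2 (fun z => -Real.log (φ z)) x ![u, u]
      = (fderiv ℝ φ x u) ^ 2 / (φ x) ^ 2 - iteratedFDeriv ℝ 2 φ x ![u, u] / φ x := by
  have hev : ∀ᶠ z in 𝓝 x, ContDiffAt ℝ 2 φ z ∧ φ z ≠ 0 := by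
    filter_upwards [h2.eventually (by norm_num), h2.continuousAt.eventually_ne hx] with z h1 h2
    exact ⟨h1, h2⟩
  have key : (fun z => fderiv ℝ (fun w => -Real.log (φ w)) z)
      =ᶠ[𝓝 x] (fun z => (-(φ z)⁻¹) • fderiv ℝ φ z) := by
    filter_upwards [hev] with z hz
    have hd : HasFDerivAt φ (fderiv ℝ φ z) z :=
      (hz.1.differentiableAt (by norm_num)).hasFDerivAt
    have : HasFDerivAt (fun w => -Real.log (φ w)) (-((φ z)⁻¹ • fderiv ℝ φ z)) z :=
      (hd.log hz.2).neg
    rw [this.fderiv, neg_smul]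
  have hφd : DifferentiableAt ℝ φ x := h2.differentiableAt (by norm_num)
  have hFd : DifferentiableAt ℝ (fderiv ℝ φ) x :=
    (h2.fderiv_right (m := 1) (by norm_num)).differentiableAt (by norm_num)
  have hc : HasFDerivAt (fun z => -(φ z)⁻¹) (((φ x) ^ 2)⁻¹ • fderiv ℝ φ x) x := by
    have := ((hasDerivAt_inv hx).comp_hasFDerivAt x hφd.hasFDerivAt).neg
    simp at this; exact this
  have hsmul : HasFDerivAt (fun z => (-(φ z)⁻¹) • fderiv ℝ φ z)
      ((-(φ x)⁻¹) • fderiv ℝ (fderiv ℝ φ) x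
        + (((φ x) ^ 2)⁻¹ • fderiv ℝ φ x).smulRight (fderiv ℝ φ x)) x :=
    hc.smul hFd.hasFDerivAt
  have h2eq : fderiv ℝ (fderiv ℝ (fun w => -Real.log (φ w))) x
      = (-(φ x)⁻¹) • fderiv ℝ (fderiv ℝ φ) x
        + (((φ x) ^ 2)⁻¹ • fderiv ℝ φ x).smulRight (fderiv ℝ φ x) := by
    rw [key.fderiv_eq, hsmul.fderiv]
  rw [iteratedFDeriv_two_apply, iteratedFDeriv_two_apply, h2eq]
  simp only [Matrix.cons_val_zero, Matrix.cons_val_one, Matrix.head_cons,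
    ContinuousLinearMap.add_apply, ContinuousLinearMap.coe_smul', Pi.smul_apply,
    ContinuousLinearMap.smulRight_apply, ContinuousLinearMap.smul_apply, smul_eq_mul]
  field_simp
  ring

end Aux


lemma keyEstimate {n : ℕ} (Ω : Set (EuclideanSpace ℝ (Fin n)))
    (hopen : IsOpen Ω) (hconv : Convex ℝ Ω)
    (φ : EuclideanSpace ℝ (Fin n) → ℝ)
    (hφC2 : ContDiffOn ℝ 2 φ (closure Ω))
    (hφpos : ∀ x ∈ Ω, 0 < φ x)
    (hφ0 : ∀ x ∈ frontier Ω, φ x = 0)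
    (hφν : ∀ x ∈ frontier Ω, fderiv ℝ φ x ≠ 0)
    (hstrict : ∀ x ∈ frontier Ω, ∀ X : EuclideanSpace ℝ (Fin n), X ≠ 0 →
      fderiv ℝ φ x X = 0 → iteratedFDeriv ℝ 2 φ x ![X, X] < 0)
    (x₀ : EuclideanSpace ℝ (Fin n)) (hx₀ : x₀ ∈ frontier Ω) :
    ∃ δ > (0:ℝ), ∃ ρ > (0:ℝ), ∀ y ∈ Ω, dist y x₀ < ρ → ∀ u : EuclideanSpace ℝ (Fin n),
      ‖u‖ = 1 → δ ≤ (fderiv ℝ φ y u) ^ 2 / φ y - iteratedFDeriv ℝ 2 φ y ![u, u] := by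
  classical
  set s : Set (EuclideanSpace ℝ (Fin n)) := closure Ω with hs
  have hΩne : Ω.Nonempty := by
    rcases Set.eq_empty_or_nonempty Ω with h | h
    · rw [h] at hx₀; simp at hx₀
    · exact h
  have hx₀s : x₀ ∈ s := hx₀.1  -- frontier = closure \ interior? frontier Ω ⊆ closure Ω
  have hintne : (interior s).Nonempty :=
    hΩne.mono ((hopen.subset_interior_iff.mpr subset_closure))
  have hUD : UniqueDiffOn ℝ s := uniqueDiffOn_convex hconv.closure hintne
  have hmemnhds : ∀ y ∈ Ω, s ∈ 𝓝 y := fun y hy =>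
    Filter.mem_of_superset (hopen.mem_nhds hy) subset_closure
  -- interior identifications
  have hG1 : ∀ y ∈ Ω, fderivWithin ℝ φ s y = fderiv ℝ φ y := fun y hy =>
    fderivWithin_of_mem_nhds (hmemnhds y hy)
  have hG2 : ∀ y ∈ Ω, iteratedFDerivWithin ℝ 2 φ s y = iteratedFDeriv ℝ 2 φ y := by
    intro y hy
    have h1 : s =ᶠ[𝓝 y] (univ : Set (EuclideanSpace ℝ (Fin n))) := by
      rw [Filter.eventuallyEq_univ]; exact hmemnhds y hy
    rw [iteratedFDerivWithin_congr_set h1, iteratedFDerivWithin_univ]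
  -- continuity of within-derivatives on s
  have cont1 : ContinuousOn (fun y => fderivWithin ℝ φ s y) s :=
    ((hφC2.fderivWithin hUD (m := 1) (by norm_num)).continuousOn)
  have cont2 : ContinuousOn (iteratedFDerivWithin ℝ 2 φ s) s :=
    hφC2.continuousOn_iteratedFDerivWithin (m := 2) (by norm_num) hUD
  by_contra hcon
  push_neg at hcon
  have H : ∀ j : ℕ, ∃ y, y ∈ Ω ∧ dist y x₀ < 1 / (j + 1) ∧ ∃ u : EuclideanSpace ℝ (Fin n), ‖u‖ = 1 ∧
      (fderiv ℝ φ y u) ^ 2 / φ y - iteratedFDeriv ℝ 2 φ y ![u, u] < 1 / (j + 1) := by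
    intro j
    obtain ⟨y, hy, hyd, u, hu, hlt⟩ := hcon (1 / (j + 1)) (by positivity) (1 / (j + 1)) (by positivity)
    exact ⟨y, hy, hyd, u, hu, hlt⟩
  choose y hyΩ hyd u hu hlt using H
  have hys : ∀ j, y j ∈ s := fun j => subset_closure (hyΩ j)
  have hone : Tendsto (fun j : ℕ => 1 / ((j : ℝ) + 1)) atTop (𝓝 0) :=
    tendsto_one_div_add_atTop_nhds_zero_nat
  have hyx : Tendsto y atTop (𝓝 x₀) := by
    rw [tendsto_iff_dist_tendsto_zero]
    exact squeeze_zero (fun j => dist_nonneg) (fun j => (hyd j).le) hone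
  -- subsequence with converging directions
  obtain ⟨u₀, hu₀mem, σ, hσmono, hσtend⟩ :=
    (isCompact_sphere (0 : EuclideanSpace ℝ (Fin n)) 1).tendsto_subseq (fun j => by
      simpa [mem_sphere_iff_norm] using hu j)
  have hu₀ : ‖u₀‖ = 1 := by simpa [mem_sphere_iff_norm] using hu₀mem
  have hyxσ : Tendsto (y ∘ σ) atTop (𝓝 x₀) := hyx.comp hσmono.tendsto_atTop
  have htends : Tendsto (y ∘ σ) atTop (𝓝[s] x₀) :=
    tendsto_nhdsWithin_of_tendsto_nhds_of_eventually_within _ hyxσ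
      (Eventually.of_forall (fun j => hys (σ j)))
  -- convergence of φ values
  have hφx₀ : φ x₀ = 0 := hφ0 x₀ hx₀
  have hφcont : ContinuousWithinAt φ s x₀ := hφC2.continuousOn.continuousWithinAt hx₀s
  have hφtend : Tendsto (fun j => φ (y (σ j))) atTop (𝓝 0) := by
    have := hφcont.tendsto.comp htends
    rwa [hφx₀] at this
  -- convergence of first derivatives applied to u
  have huσ : Tendsto (fun j => u (σ j)) atTop (𝓝 u₀) := hσtend
  have hptend : Tendsto (fun j => fderiv ℝ φ (y (σ j)) (u (σ j))) atTop
      (𝓝 (fderivWithin ℝ φ s x₀ u₀)) := by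
    have h1 : Tendsto (fun j => fderivWithin ℝ φ s (y (σ j))) atTop
        (𝓝 (fderivWithin ℝ φ s x₀)) := (cont1.continuousWithinAt hx₀s).tendsto.comp htends
    have := (isBoundedBilinearMap_apply.continuous.tendsto _).comp (h1.prodMk_nhds huσ)
    refine this.congr (fun j => ?_)
    simp only [Function.comp]
    rw [hG1 _ (hyΩ (σ j))]
  -- convergence of Hessians
  have hvtend : Tendsto (fun j => ![u (σ j), u (σ j)]) atTop (𝓝 ![u₀, u₀]) := by
    rw [tendsto_pi_nhds]
    intro i
    refine Fin.cases ?_ (fun i => Fin.cases ?_ (fun i => i.elim0) i) i <;> simpa using huσ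
  have hHtend : Tendsto (fun j => iteratedFDeriv ℝ 2 φ (y (σ j)) ![u (σ j), u (σ j)]) atTop
      (𝓝 (iteratedFDerivWithin ℝ 2 φ s x₀ ![u₀, u₀])) := by
    have h1 : Tendsto (fun j => iteratedFDerivWithin ℝ 2 φ s (y (σ j))) atTop
        (𝓝 (iteratedFDerivWithin ℝ 2 φ s x₀)) := (cont2.continuousWithinAt hx₀s).tendsto.comp htends
    have := h1.eval hvtend
    refine this.congr (fun j => ?_)
    rw [hG2 _ (hyΩ (σ j))]
  have hltσ : ∀ j, (fderiv ℝ φ (y (σ j)) (u (σ j))) ^ 2 / φ (y (σ j))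
      - iteratedFDeriv ℝ 2 φ (y (σ j)) ![u (σ j), u (σ j)] < 1 / ((j : ℝ) + 1) := by
    intro j
    refine lt_of_lt_of_le (hlt (σ j)) ?_
    have h : j ≤ σ j := hσmono.le_apply
    have h' : (j : ℝ) ≤ (σ j : ℝ) := Nat.cast_le.mpr h
    exact one_div_le_one_div_of_le (by positivity) (by linarith)
  set p₀ := fderivWithin ℝ φ s x₀ u₀ with hp₀
  by_cases hp : p₀ = 0
  · -- tangent case
    have hu₀ne : u₀ ≠ 0 := fun h => by simp [h] at hu₀
    have hdiff₀ : DifferentiableAt ℝ φ x₀ := by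
      by_contra h
      exact hφν x₀ hx₀ (fderiv_zero_of_not_differentiableAt h)
    have hfw : fderivWithin ℝ φ s x₀ = fderiv ℝ φ x₀ := hdiff₀.fderivWithin (hUD x₀ hx₀s)
    have htan : fderiv ℝ φ x₀ u₀ = 0 := by rw [← hfw]; exact hp
    have hstrict₀ := hstrict x₀ hx₀ u₀ hu₀ne htan
    have hHval : iteratedFDerivWithin ℝ 2 φ s x₀ ![u₀, u₀] = iteratedFDeriv ℝ 2 φ x₀ ![u₀, u₀] := by
      by_cases hF : DifferentiableAt ℝ (fderiv ℝ φ) x₀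
      · have hUΩ : UniqueDiffWithinAt ℝ Ω x₀ :=
          uniqueDiffWithinAt_convex hconv (by rwa [hopen.interior_eq]) hx₀s
        have hA : HasFDerivWithinAt (fderivWithin ℝ φ s)
            (fderivWithin ℝ (fderivWithin ℝ φ s) s x₀) s x₀ := by
          have hC1 : ContDiffOn ℝ 1 (fderivWithin ℝ φ s) s := hφC2.fderivWithin hUD (m := 1) (by norm_num)
          exact ((hC1.differentiableOn (by norm_num)) x₀ hx₀s).hasFDerivWithinAt
        have hA' : HasFDerivWithinAt (fderiv ℝ φ)
            (fderivWithin ℝ (fderivWithin ℝ φ s) s x₀) Ω x₀ := by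
          refine (hA.mono subset_closure).congr (fun z hz => (hG1 z hz).symm) hfw.symm
        have hB' : HasFDerivWithinAt (fderiv ℝ φ) (fderiv ℝ (fderiv ℝ φ) x₀) Ω x₀ :=
          hF.hasFDerivAt.hasFDerivWithinAt
        have heq := hUΩ.eq hA' hB'
        rw [iteratedFDerivWithin_two_apply φ hUD hx₀s, iteratedFDeriv_two_apply, heq]
      · exfalso
        rw [iteratedFDeriv_two_apply, fderiv_zero_of_not_differentiableAt hF] at hstrict₀
        simp at hstrict₀
    rw [hHval] at hHtend
    have hub : ∀ j, -(iteratedFDeriv ℝ 2 φ (y (σ j)) ![u (σ j), u (σ j)]) < 1 / ((j : ℝ) + 1) := by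
      intro j
      have hpos : 0 < φ (y (σ j)) := hφpos _ (hyΩ (σ j))
      have hsq : 0 ≤ (fderiv ℝ φ (y (σ j)) (u (σ j))) ^ 2 / φ (y (σ j)) := by positivity
      linarith [hltσ j]
    have hle : -(iteratedFDeriv ℝ 2 φ x₀ ![u₀, u₀]) ≤ 0 :=
      le_of_tendsto_of_tendsto' hHtend.neg hone (fun j => (hub j).le)
    linarith
  · -- transversal case
    have hφpos' : ∀ j, 0 < φ (y (σ j)) := fun j => hφpos _ (hyΩ (σ j))
    have hφ0within : Tendsto (fun j => φ (y (σ j))) atTop (𝓝[>] 0) :=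
      tendsto_nhdsWithin_of_tendsto_nhds_of_eventually_within _ hφtend
        (Eventually.of_forall (fun j => hφpos' j))
    have hinv : Tendsto (fun j => (φ (y (σ j)))⁻¹) atTop atTop :=
      hφ0within.inv_tendsto_nhdsGT_zero
    have hsqtend : Tendsto (fun j => (fderiv ℝ φ (y (σ j)) (u (σ j))) ^ 2) atTop (𝓝 (p₀ ^ 2)) :=
      hptend.pow 2
    have hmul : Tendsto (fun j => (fderiv ℝ φ (y (σ j)) (u (σ j))) ^ 2 / φ (y (σ j)))
        atTop atTop := by
      have := hsqtend.pos_mul_atTop (pow_pos (abs_pos.mpr hp) 2 |> fun _ => (by positivity : (0:ℝ) < p₀ ^ 2)) hinv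
      simpa [div_eq_mul_inv] using this
    have hfinal : Tendsto (fun j => (fderiv ℝ φ (y (σ j)) (u (σ j))) ^ 2 / φ (y (σ j))
        - iteratedFDeriv ℝ 2 φ (y (σ j)) ![u (σ j), u (σ j)]) atTop atTop :=
      hmul.atTop_add hHtend.neg
    have : ∀ᶠ j in atTop, (1:ℝ) ≤ (fderiv ℝ φ (y (σ j)) (u (σ j))) ^ 2 / φ (y (σ j))
        - iteratedFDeriv ℝ 2 φ (y (σ j)) ![u (σ j), u (σ j)] := hfinal.eventually_ge_atTop 1
    obtain ⟨j, hj⟩ := this.exists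
    have : 1 / ((j : ℝ) + 1) ≤ 1 := by
      rw [div_le_one (by positivity)]; linarith [Nat.cast_nonneg (α := ℝ) j]
    linarith [hltσ j]



theorem stmt13 {n : ℕ} (Ω : Set (EuclideanSpace ℝ (Fin n)))
    (hopen : IsOpen Ω) (hbd : Bornology.IsBounded Ω) (hconv : Convex ℝ Ω)
    (φ : EuclideanSpace ℝ (Fin n) → ℝ)
    (hφC2 : ContDiffOn ℝ 2 φ (closure Ω))
    (hφpos : ∀ x ∈ Ω, 0 < φ x)
    (hφ0 : ∀ x ∈ frontier Ω, φ x = 0)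
    (hφν : ∀ x ∈ frontier Ω, fderiv ℝ φ x ≠ 0)
    (hstrict : ∀ x ∈ frontier Ω, ∀ X : EuclideanSpace ℝ (Fin n), X ≠ 0 →
      fderiv ℝ φ x X = 0 → iteratedFDeriv ℝ 2 φ x ![X, X] < 0)
    (xk yk : ℕ → EuclideanSpace ℝ (Fin n))
    (hxk : ∀ k, xk k ∈ Ω) (hyk : ∀ k, yk k ∈ Ω)
    (x₀ : EuclideanSpace ℝ (Fin n)) (hx₀ : x₀ ∈ frontier Ω)
    (hxlim : Filter.Tendsto xk Filter.atTop (nhds x₀))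
    (hylim : Filter.Tendsto yk Filter.atTop (nhds x₀)) :
    0 ≤ Filter.atTop.liminf (fun k => segEf (fun z => -Real.log (φ z)) (xk k) (yk k)) ∧
    ((∀ᶠ k in Filter.atTop, xk k ≠ yk k) →
      Filter.Tendsto
        (fun k => segEf (fun z => -Real.log (φ z)) (xk k) (yk k) / ‖yk k - xk k‖)
        Filter.atTop Filter.atTop) := by
  classical
  set g : EuclideanSpace ℝ (Fin n) → ℝ := fun z => -Real.log (φ z) with hg
  have hx₀cl : x₀ ∈ closure Ω := hx₀.1
  have hC2at : ∀ z ∈ Ω, ContDiffAt ℝ 2 φ z := fun z hz =>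
    hφC2.contDiffAt (Filter.mem_of_superset (hopen.mem_nhds hz) subset_closure)
  have hgC2at : ∀ z ∈ Ω, ContDiffAt ℝ 2 g z := fun z hz =>
    ((hC2at z hz).log (ne_of_gt (hφpos z hz))).neg
  have hgIterCont : ContinuousOn (iteratedFDeriv ℝ 2 g) Ω := by
    have hgΩ : ContDiffOn ℝ 2 g Ω := fun z hz => (hgC2at z hz).contDiffWithinAt
    have h1 := hgΩ.continuousOn_iteratedFDerivWithin (m := 2) (by norm_num) hopen.uniqueDiffOn
    exact h1.congr (fun z hz => (iteratedFDerivWithin_of_isOpen 2 hopen hz).symm)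
  -- main quantitative lemma
  have main : ∀ m : ℝ, 0 < m →
      ∀ᶠ k in atTop, m * ‖yk k - xk k‖ ≤ segEf g (xk k) (yk k) := by
    intro m hm
    obtain ⟨δ, hδ, ρ, hρ, hkey⟩ := keyEstimate Ω hopen hconv φ hφC2 hφpos hφ0 hφν hstrict x₀ hx₀
    set ε : ℝ := δ / m with hε
    have hεpos : 0 < ε := div_pos hδ hm
    have hφcont : ContinuousWithinAt φ (closure Ω) x₀ :=
      hφC2.continuousOn.continuousWithinAt hx₀cl
    rw [Metric.continuousWithinAt_iff] at hφcont
    obtain ⟨ρ', hρ', hball⟩ := hφcont ε hεpos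
    set ρ₀ : ℝ := min ρ ρ' with hρ₀
    have hρ₀pos : 0 < ρ₀ := lt_min hρ hρ'
    have hxev := Metric.tendsto_nhds.mp hxlim ρ₀ hρ₀pos
    have hyev := Metric.tendsto_nhds.mp hylim ρ₀ hρ₀pos
    filter_upwards [hxev, hyev] with k hxb hyb
    rcases eq_or_ne (yk k) (xk k) with heq | hne
    · simp [segEf, heq]
    · set x := xk k with hxdef
      set y := yk k with hydef
      have hr : 0 < ‖y - x‖ := by rw [norm_pos_iff]; exact sub_ne_zero.mpr hne
      set r : ℝ := ‖y - x‖ with hrdef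
      set u : EuclideanSpace ℝ (Fin n) := ‖y - x‖⁻¹ • (y - x) with hudef
      have hu1 : ‖u‖ = 1 := by
        rw [hudef, norm_smul, norm_inv, norm_norm]
        field_simp
        exact div_self (ne_of_gt hr)
      have hpt : ∀ t ∈ Set.Icc (0:ℝ) r, (x + t • u) ∈ Ω ∧ dist (x + t • u) x₀ < ρ₀ := by
        intro t ht
        have htu : t • u = (t / r) • (y - x) := by
          rw [hudef, smul_smul, div_eq_mul_inv]
        have htmem : t / r ∈ Set.Icc (0:ℝ) 1 :=
          ⟨div_nonneg ht.1 hr.le, div_le_one_of_le₀ ht.2 hr.le⟩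
        constructor
        · rw [htu]
          exact hconv.add_smul_sub_mem (hxk k) (hyk k) htmem
        · have hxball : x ∈ Metric.ball x₀ ρ₀ := Metric.mem_ball.mpr hxb
          have hyball : y ∈ Metric.ball x₀ ρ₀ := Metric.mem_ball.mpr hyb
          have := (convex_ball x₀ ρ₀).add_smul_sub_mem hxball hyball htmem
          rw [htu]
          exact Metric.mem_ball.mp this
      have hlow : ∀ t ∈ Set.Icc (0:ℝ) r, m ≤ iteratedFDeriv ℝ 2 g (x + t • u) ![u, u] := by
        intro t ht
        obtain ⟨hzΩ, hzd⟩ := hpt t ht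
        set z := x + t • u with hzdef
        have hφz : 0 < φ z := hφpos z hzΩ
        have hφzlt : φ z < ε := by
          have h1 := hball (subset_closure hzΩ) (lt_of_lt_of_le hzd (min_le_right ρ ρ'))
          rw [hφ0 x₀ hx₀, Real.dist_eq, sub_zero] at h1
          exact lt_of_le_of_lt (le_abs_self _) h1
        have hk := hkey z hzΩ (lt_of_lt_of_le hzd (min_le_left ρ ρ')) u hu1
        have hform := hessNegLog φ z (hC2at z hzΩ) (ne_of_gt hφz) u
        rw [hform]
        have heq2 : (fderiv ℝ φ z u) ^ 2 / (φ z) ^ 2 - iteratedFDeriv ℝ 2 φ z ![u, u] / φ z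
            = ((fderiv ℝ φ z u) ^ 2 / φ z - iteratedFDeriv ℝ 2 φ z ![u, u]) / φ z := by
          field_simp
        rw [heq2]
        have hm' : m = δ / ε := by
          rw [hε]
          field_simp
        rw [hm']
        gcongr
        exact (lt_of_lt_of_le hδ hk).le
      have hcontI : ContinuousOn (fun t : ℝ => iteratedFDeriv ℝ 2 g (x + t • u) ![u, u])
          (Set.Icc 0 r) := by
        have hline : Continuous (fun t : ℝ => x + t • u) := continuous_const.add (continuous_id.smul continuous_const)
        have hmaps : Set.MapsTo (fun t : ℝ => x + t • u) (Set.Icc 0 r) Ω :=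
          fun t ht => (hpt t ht).1
        have hF := hgIterCont.comp hline.continuousOn hmaps
        exact hF.eval continuousOn_const
      have hInt : IntervalIntegrable (fun t : ℝ => iteratedFDeriv ℝ 2 g (x + t • u) ![u, u])
          MeasureTheory.volume 0 r := by
        have : Set.uIcc (0:ℝ) r = Set.Icc 0 r := Set.uIcc_of_le hr.le
        exact (this ▸ hcontI).intervalIntegrable
      have hcalc : m * r ≤ ∫ t in (0:ℝ)..r, iteratedFDeriv ℝ 2 g (x + t • u) ![u, u] := by
        have h1 : (∫ _ in (0:ℝ)..r, m) = m * r := by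
          rw [intervalIntegral.integral_const]
          simp [mul_comm]
        rw [← h1]
        exact intervalIntegral.integral_mono_on hr.le intervalIntegrable_const hInt hlow
      exact hcalc
  constructor
  · -- liminf part
    have h0 : ∀ᶠ k in atTop, (0:ℝ) ≤ segEf g (xk k) (yk k) := by
      filter_upwards [main 1 one_pos] with k hk
      have : (0:ℝ) ≤ 1 * ‖yk k - xk k‖ := by positivity
      linarith
    rw [Filter.liminf_eq]
    by_cases hbdd : BddAbove {a | ∀ᶠ k in atTop, a ≤ segEf g (xk k) (yk k)}
    · exact le_csSup hbdd h0
    · rw [Real.sSup_of_not_bddAbove hbdd]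
  · intro hne
    rw [Filter.tendsto_atTop]
    intro b
    have hmpos : (0:ℝ) < max b 1 := lt_of_lt_of_le one_pos (le_max_right b 1)
    filter_upwards [main (max b 1) hmpos, hne] with k hk hk'
    have hr : 0 < ‖yk k - xk k‖ := by
      rw [norm_pos_iff]; exact sub_ne_zero.mpr (Ne.symm hk')
    have : max b 1 ≤ segEf g (xk k) (yk k) / ‖yk k - xk k‖ := by
      rw [le_div_iff₀ hr]
      exact hk
    exact le_trans (le_max_left b 1) this
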